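/- Let λ > 0, let a, b, c be real numbers, let N ≥ 1 and let Y_1, …, Y_N be nonnegative reals with positive exponents α_1, …, α_N, and set α = ∑_{k=1}^N α_k. Then the Generalized Box–Cox Transformation satisfies the label-transformation identity G_λ(a · b · c · ∏_{k=1}^N Y_k^{α_k}) = λ^{α+2} · G_λ(a) · G_λ(b) · G_λ(c) · ∏_{k=1}^N (G_λ(Y_k))^{α_k}, where powers with real exponents are interpreted via Real.rpow. -/

import Mathlib

/-- The Generalized Box–Cox Transformation (GBCT) with parameter `lam`. -/
noncomputable def gbct (lam : ℝ) (x : ℝ) : ℝ :=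
  if 0 ≤ x then x ^ lam / lam else -((-x) ^ lam) / lam

lemma gbct_mul (lam : ℝ) (hlam : 0 < lam) (x y : ℝ) :
    gbct lam (x * y) = lam * gbct lam x * gbct lam y := by
  have hl : lam ≠ 0 := hlam.ne'
  unfold gbct
  rcases le_or_gt 0 x with hx | hx
  · rcases le_or_gt 0 y with hy | hy
    · rw [if_pos (mul_nonneg hx hy), if_pos hx, if_pos hy, Real.mul_rpow hx hy]
      field_simp; try ring
    · rcases eq_or_lt_of_le hx with hx0 | hx0
      · simp [← hx0, Real.zero_rpow hl]
      · rw [if_neg (not_le.2 (mul_neg_of_pos_of_neg hx0 hy)), if_pos hx,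
          if_neg (not_le.2 hy)]
        have h : -(x * y) = x * (-y) := by ring
        rw [h, Real.mul_rpow hx (by linarith)]
        field_simp; try ring
  · rcases le_or_gt 0 y with hy | hy
    · rcases eq_or_lt_of_le hy with hy0 | hy0
      · simp [← hy0, Real.zero_rpow hl]
      · rw [if_neg (not_le.2 (mul_neg_of_neg_of_pos hx hy0)), if_neg (not_le.2 hx),
          if_pos hy]
        have h : -(x * y) = (-x) * y := by ring
        rw [h, Real.mul_rpow (by linarith) hy]
        field_simp; try ring
    · rw [if_pos (mul_pos_of_neg_of_neg hx hy).le, if_neg (not_le.2 hx),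
        if_neg (not_le.2 hy)]
      have h : x * y = (-x) * (-y) := by ring
      rw [h, Real.mul_rpow (by linarith) (by linarith)]
      field_simp; try ring

lemma gbct_nonneg_eq (lam : ℝ) (x : ℝ) (hx : 0 ≤ x) : gbct lam x = x ^ lam / lam := by
  simp [gbct, hx]

/-- Label-transformation identity: for λ > 0, reals a, b, c, N ≥ 1 nonnegative reals
Y_1, …, Y_N with positive exponents α_1, …, α_N, and α = ∑_k α_k,
`G_λ(a·b·c·∏_k Y_k^{α_k}) = λ^{α+2} · G_λ(a) · G_λ(b) · G_λ(c) · ∏_k (G_λ(Y_k))^{α_k}`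
(powers with real exponents via `Real.rpow`). -/
theorem gbct_label_transformation (lam : ℝ) (hlam : 0 < lam) (a b c : ℝ)
    (N : ℕ) (hN : 1 ≤ N) (Y : Fin N → ℝ) (hY : ∀ k, 0 ≤ Y k)
    (α : Fin N → ℝ) (hα : ∀ k, 0 < α k) :
    gbct lam (a * b * c * ∏ k, Y k ^ α k) =
      lam ^ ((∑ k, α k) + 2) * gbct lam a * gbct lam b * gbct lam c *
        ∏ k, (gbct lam (Y k)) ^ α k := by
  have hl : lam ≠ 0 := hlam.ne'
  have hPk : ∀ k, (0:ℝ) ≤ Y k ^ α k := fun k => Real.rpow_nonneg (hY k) _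
  have hPnn : (0:ℝ) ≤ ∏ k, Y k ^ α k := Finset.prod_nonneg fun k _ => hPk k
  -- compute gbct of the product of the Y-part
  have hProd : gbct lam (∏ k, Y k ^ α k) =
      lam ^ ((∑ k, α k) - 1) * ∏ k, (gbct lam (Y k)) ^ α k := by
    rw [gbct_nonneg_eq lam _ hPnn]
    rw [← Real.finset_prod_rpow _ _ (fun k _ => hPk k)]
    have h1 : ∀ k : Fin N, (Y k ^ α k) ^ lam = (Y k ^ lam) ^ α k := by
      intro k
      rw [← Real.rpow_mul (hY k), mul_comm, Real.rpow_mul (hY k)]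
    have h2 : ∀ k : Fin N, (gbct lam (Y k)) ^ α k =
        (Y k ^ lam) ^ α k / lam ^ α k := by
      intro k
      rw [gbct_nonneg_eq lam _ (hY k),
        Real.div_rpow (Real.rpow_nonneg (hY k) _) hlam.le]
    simp only [h1, h2]
    rw [Finset.prod_div_distrib]
    rw [← Real.rpow_sum_of_pos hlam]
    rw [Real.rpow_sub hlam, Real.rpow_one]
    field_simp
  rw [gbct_mul lam hlam, gbct_mul lam hlam, gbct_mul lam hlam, hProd,
    Real.rpow_add hlam]
  have : lam ^ (2:ℝ) = lam * lam * lam / lam := by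
    rw [show (2:ℝ) = 1 + 1 by norm_num, Real.rpow_add hlam, Real.rpow_one]
    field_simp
  rw [Real.rpow_sub hlam, Real.rpow_one] at *
  field_simp
  rw [Real.rpow_two]
  ring
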